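/- arXiv:2204.01908 — 2 statements merged into one kernel-verified Lean document; each statement's English description precedes it below -/
import Mathlib

section
/- For every vertex v of the infinite hexagonal grid there exist three one-way infinite paths P^1, P^2, P^3, each starting at v (write P^j as the sequence v = p^j_0, p^j_1, p^j_2, …), such that for all distinct j, j' ∈ {1,2,3} and every i ≥ 0, the graph distance in the hexagonal grid between p^j_i and p^{j'}_i is at least i. -/
/- Distance-restricted firefighter game (Burgess, Marcoux, Pike, arXiv:2204.01908).

At time 0 a fire breaks out at the set `F` of vertices and each firefighter is placed on
(protects) a vertex not in `F`.  At each subsequent time step the fire spreads to every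
unburnt, unprotected neighbour of a burning vertex, and then each firefighter moves to a
vertex at distance at most `d` from its current vertex in the subgraph induced by the
unburnt vertices (i.e. along a walk of length ≤ `d` through unburnt vertices).
Occupied vertices are protected forever.  The fire is contained if the burnt set
stabilizes after finitely many steps. -/

namespace Firefight

variable {V : Type*}

/-- There is a walk in `G` from `u` to `v` of length at most `d` all of whose vertices
(including the endpoints) lie in `S`. -/
def ReachWithin (G : SimpleGraph V) (S : Set V) (d : ℕ) (u v : V) : Prop :=
  ∃ p : G.Walk u v, p.length ≤ d ∧ ∀ x ∈ p.support, x ∈ S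

/-- The set of burnt vertices at each time: `F` is the set initially on fire, and
`prot t` is the set of vertices that are protected when the fire spreads at step `t+1`. -/
def burnt (G : SimpleGraph V) (F : Set V) (prot : ℕ → Set V) : ℕ → Set V
  | 0 => F
  | t + 1 => burnt G F prot t ∪ {v | v ∉ prot t ∧ ∃ w ∈ burnt G F prot t, G.Adj w v}

/-- The set of vertices protected by time `t`: all vertices occupied by some firefighter
at some time `s ≤ t`, where `pos s i` is the vertex occupied by firefighter `i` at time `s`. -/
def protOf {k : ℕ} (pos : ℕ → Fin k → V) (t : ℕ) : Set V :=
  {v | ∃ s ≤ t, ∃ i, pos s i = v}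

/-- `k` firefighters, each moving distance at most `d` per turn within the unburnt subgraph,
can contain a fire starting at `F`, the burnt set stabilizing by time `T`. -/
def CanContainIn (G : SimpleGraph V) (d k : ℕ) (F : Set V) (T : ℕ) : Prop :=
  ∃ pos : ℕ → Fin k → V,
    (∀ i, pos 0 i ∉ F) ∧
    (∀ t i, ReachWithin G (burnt G F (protOf pos) (t + 1))ᶜ d (pos t i) (pos (t + 1) i)) ∧
    ∀ t, burnt G F (protOf pos) t ⊆ burnt G F (protOf pos) T

/-- `k` firefighters, each moving distance at most `d` per turn within the unburnt subgraph,
can contain a fire starting at `F`. -/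
def CanContain (G : SimpleGraph V) (d k : ℕ) (F : Set V) : Prop :=
  ∃ T, CanContainIn G d k F T

/-- The distance-restricted firefighter number `f_d(G,u)`: the least number of firefighters
that can contain a fire starting at `u` in the distance-`d` game. -/
noncomputable def fdNum (G : SimpleGraph V) (d : ℕ) (u : V) : ℕ :=
  sInf {k | CanContain G d k {u}}

/-- The infinite hexagonal grid: vertex set `ℤ × ℤ`, with `(x,y)` adjacent to `(x±1,y)`
for all `x, y`, and `(x,y)` adjacent to `(x,y+1)` exactly when `x + y` is even. -/
def hexGrid : SimpleGraph (ℤ × ℤ) :=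
  SimpleGraph.fromRel (fun p q =>
    (p.2 = q.2 ∧ |p.1 - q.1| = 1) ∨ (p.1 = q.1 ∧ Even (p.1 + p.2) ∧ q.2 = p.2 + 1))

lemma hex_adj_step {u w : ℤ × ℤ} (h : hexGrid.Adj u w) :
    (u.1 - w.1).natAbs + (u.2 - w.2).natAbs = 1 := by
  obtain ⟨hne, h | h⟩ := h <;>
    rcases h with ⟨h1, h2⟩ | ⟨h1, h2, h3⟩ <;>
    [skip; skip; skip; skip] <;>
    first
    | (have := (abs_eq (by norm_num : (0:ℤ) ≤ 1)).mp h2; omega)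
    | omega

lemma hex_walk_length {u w : ℤ × ℤ} (p : hexGrid.Walk u w) :
    (u.1 - w.1).natAbs + (u.2 - w.2).natAbs ≤ p.length := by
  induction p with
  | nil => simp
  | cons h q ih =>
    have h1 := hex_adj_step h
    simp only [SimpleGraph.Walk.length_cons]
    omega

lemma hex_dist_ge {u w : ℤ × ℤ} (h : hexGrid.Reachable u w) :
    (u.1 - w.1).natAbs + (u.2 - w.2).natAbs ≤ hexGrid.dist u w := by
  obtain ⟨p, hp⟩ := h.exists_walk_length_eq_dist
  exact hp ▸ hex_walk_length p

lemma chain_reachable (f : ℕ → ℤ × ℤ) (hf : ∀ i, hexGrid.Adj (f i) (f (i+1))) :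
    ∀ i, hexGrid.Reachable (f 0) (f i)
  | 0 => SimpleGraph.Reachable.refl _
  | (i+1) => (chain_reachable f hf i).trans (hf i).reachable

lemma hex_adj_left (x y : ℤ) : hexGrid.Adj (x, y) (x - 1, y) := by
  refine (SimpleGraph.fromRel_adj _ _ _).2 ⟨?_, Or.inl (Or.inl ⟨rfl, by simp⟩)⟩
  simp [Prod.ext_iff]; omega

lemma hex_adj_right (x y : ℤ) : hexGrid.Adj (x, y) (x + 1, y) := by
  have := (hex_adj_left (x+1) y).symm
  simpa using this

lemma hex_adj_up (x y : ℤ) (h : Even (x + y)) : hexGrid.Adj (x, y) (x, y + 1) := by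
  refine (SimpleGraph.fromRel_adj _ _ _).2 ⟨?_, Or.inl (Or.inr ⟨rfl, h, rfl⟩)⟩
  simp [Prod.ext_iff]



/-- For every vertex `v` of the infinite hexagonal grid there are three one-way infinite
paths `p 0, p 1, p 2` starting at `v` (injective sequences of consecutively adjacent
vertices) such that for distinct `j, j'` and every `i`, the graph distance in the
hexagonal grid between the `i`-th vertices of `p j` and `p j'` is at least `i`. -/
theorem hex_grid_three_spreading_paths (v : ℤ × ℤ) :
    ∃ p : Fin 3 → ℕ → ℤ × ℤ,
      (∀ j, p j 0 = v) ∧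
      (∀ j, Function.Injective (p j)) ∧
      (∀ j i, hexGrid.Adj (p j i) (p j (i + 1))) ∧
      (∀ j j', j ≠ j' → ∀ i : ℕ, i ≤ hexGrid.dist (p j i) (p j' i)) := by
  set e : ℤ := if Even (v.1 + v.2) then 1 else -1 with he
  have he1 : (Even (v.1 + v.2) ∧ e = 1) ∨ (¬ Even (v.1 + v.2) ∧ e = -1) := by
    rw [he]; split <;> simp_all
  set f0 : ℕ → ℤ × ℤ := fun i => (v.1 - i, v.2) with hf0
  set f1 : ℕ → ℤ × ℤ := fun i => (v.1 + i, v.2) with hf1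
  set f2 : ℕ → ℤ × ℤ :=
    fun i => (v.1 + ((i / 2 : ℕ) : ℤ), v.2 + e * (((i + 1) / 2 : ℕ) : ℤ)) with hf2
  have hee : e = 1 ∨ e = -1 := by rw [he]; split <;> simp
  -- adjacency
  have adj0 : ∀ i, hexGrid.Adj (f0 i) (f0 (i + 1)) := by
    intro i
    have h : f0 (i + 1) = ((f0 i).1 - 1, (f0 i).2) := by
      simp only [hf0, Prod.mk.injEq]
      refine ⟨by push_cast; ring, trivial⟩
    rw [h]
    exact hex_adj_left _ _
  have adj1 : ∀ i, hexGrid.Adj (f1 i) (f1 (i + 1)) := by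
    intro i
    have h : f1 (i + 1) = ((f1 i).1 + 1, (f1 i).2) := by
      simp only [hf1, Prod.mk.injEq]
      refine ⟨by push_cast; ring, trivial⟩
    rw [h]
    exact hex_adj_right _ _
  have adj2 : ∀ i, hexGrid.Adj (f2 i) (f2 (i + 1)) := by
    intro i
    simp only [hf2]
    rcases Nat.even_or_odd i with ⟨k, hk⟩ | ⟨k, hk⟩ <;> subst hk
    · rw [show ((k + k) / 2 : ℕ) = k by omega, show ((k + k + 1) / 2 : ℕ) = k by omega,
        show ((k + k + 1 + 1) / 2 : ℕ) = k + 1 by omega]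
      rcases he1 with ⟨hpar, hev⟩ | ⟨hpar, hev⟩ <;> rw [hev]
      · have hpar2 : Even (v.1 + (k : ℤ) + (v.2 + (k : ℤ))) := by
          obtain ⟨m, hm⟩ := hpar
          exact ⟨m + k, by omega⟩
        convert hex_adj_up (v.1 + (k : ℤ)) (v.2 + (k : ℤ)) hpar2 using 2 <;> push_cast <;> ring
      · refine SimpleGraph.Adj.symm ?_
        have hpar2 : Even (v.1 + (k : ℤ) + (v.2 - ((k : ℤ) + 1))) := by
          rcases Int.even_or_odd (v.1 + v.2) with hh | ⟨m, hm⟩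
          · exact absurd hh hpar
          · exact ⟨m, by omega⟩
        convert hex_adj_up (v.1 + (k : ℤ)) (v.2 - ((k : ℤ) + 1)) hpar2 using 2 <;>
          push_cast <;> ring
    · rw [show ((2 * k + 1) / 2 : ℕ) = k by omega, show ((2 * k + 1 + 1) / 2 : ℕ) = k + 1 by omega,
        show ((2 * k + 1 + 1 + 1) / 2 : ℕ) = k + 1 by omega]
      convert hex_adj_right (v.1 + (k : ℤ)) (v.2 + e * ((k : ℤ) + 1)) using 2 <;>
        push_cast <;> ring
  -- injectivity
  have inj0 : Function.Injective f0 := by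
    intro i i' h
    simp only [hf0, Prod.mk.injEq] at h
    omega
  have inj1 : Function.Injective f1 := by
    intro i i' h
    simp only [hf1, Prod.mk.injEq] at h
    omega
  have inj2 : Function.Injective f2 := by
    intro i i' h
    simp only [hf2, Prod.mk.injEq] at h
    rcases hee with hev | hev <;> rw [hev] at h <;> obtain ⟨h1, h2⟩ := h <;> omega
  -- start
  have st0 : f0 0 = v := by simp [hf0]
  have st1 : f1 0 = v := by simp [hf1]
  have st2 : f2 0 = v := by simp [hf2]
  -- reachability
  have r0 : ∀ i, hexGrid.Reachable v (f0 i) := fun i => st0 ▸ chain_reachable f0 adj0 i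
  have r1 : ∀ i, hexGrid.Reachable v (f1 i) := fun i => st1 ▸ chain_reachable f1 adj1 i
  have r2 : ∀ i, hexGrid.Reachable v (f2 i) := fun i => st2 ▸ chain_reachable f2 adj2 i
  -- distances
  have d01 : ∀ i : ℕ, i ≤ hexGrid.dist (f0 i) (f1 i) := by
    intro i
    refine le_trans ?_ (hex_dist_ge ((r0 i).symm.trans (r1 i)))
    simp only [hf0, hf1]
    omega
  have d02 : ∀ i : ℕ, i ≤ hexGrid.dist (f0 i) (f2 i) := by
    intro i
    refine le_trans ?_ (hex_dist_ge ((r0 i).symm.trans (r2 i)))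
    simp only [hf0, hf2]
    rcases hee with hev | hev <;> rw [hev] <;> omega
  have d12 : ∀ i : ℕ, i ≤ hexGrid.dist (f1 i) (f2 i) := by
    intro i
    refine le_trans ?_ (hex_dist_ge ((r1 i).symm.trans (r2 i)))
    simp only [hf1, hf2]
    rcases hee with hev | hev <;> rw [hev] <;> omega
  have comm : ∀ a b : ℤ × ℤ, hexGrid.dist a b = hexGrid.dist b a := fun a b =>
    SimpleGraph.dist_comm
  refine ⟨![f0, f1, f2], ?_, ?_, ?_, ?_⟩
  · intro j; fin_cases j
    · exact st0
    · exact st1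
    · exact st2
  · intro j; fin_cases j
    · exact inj0
    · exact inj1
    · exact inj2
  · intro j i; fin_cases j
    · exact adj0 i
    · exact adj1 i
    · exact adj2 i
  · intro j j' hne i
    fin_cases j <;> fin_cases j' <;> first
      | exact absurd rfl hne
      | exact d01 i
      | exact d02 i
      | exact d12 i
      | exact (comm _ _) ▸ d01 i
      | exact (comm _ _) ▸ d02 i
      | exact (comm _ _) ▸ d12 i

end Firefight
end

section
/- For every integer d ≥ 2, two firefighters suffice to contain the fire on the infinite hexagonal grid in the distance-restricted game with parameter d (and when d = 2 they can contain it within five turns); that is, f_d(G_hex) ≤ 2 for all d ≥ 2. -/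
/- Distance-restricted firefighter game (Burgess, Marcoux, Pike, arXiv:2204.01908).

At time 0 a fire breaks out at the set `F` of vertices and each firefighter is placed on
(protects) a vertex not in `F`.  At each subsequent time step the fire spreads to every
unburnt, unprotected neighbour of a burning vertex, and then each firefighter moves to a
vertex at distance at most `d` from its current vertex in the subgraph induced by the
unburnt vertices (i.e. along a walk of length ≤ `d` through unburnt vertices).
Occupied vertices are protected forever.  The fire is contained if the burnt set
stabilizes after finitely many steps. -/

namespace Firefight

variable {V : Type*}

set_option maxHeartbeats 1600000
set_option maxRecDepth 8000
set_option synthInstance.maxHeartbeats 2000000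
set_option synthInstance.maxSize 4000

theorem burnt_succ (G : SimpleGraph V) (F : Set V) (P : ℕ → Set V) (t : ℕ) :
    burnt G F P (t+1) = burnt G F P t ∪ {v | v ∉ P t ∧ ∃ w ∈ burnt G F P t, G.Adj w v} := rfl

theorem hexAdj (a b c d : ℤ) : hexGrid.Adj (a,b) (c,d) ↔
    ((b = d ∧ (c = a+1 ∨ c = a-1)) ∨
     (a = c ∧ (((a+b) % 2 = 0 ∧ d = b+1) ∨ ((c+d) % 2 = 0 ∧ b = d+1)))) := by
  simp only [hexGrid, SimpleGraph.fromRel_adj, Prod.ext_iff, ne_eq, not_and, Int.even_iff,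
    Int.abs_eq_natAbs]
  omega

theorem burnt_mono (G : SimpleGraph V) (F : Set V) (P : ℕ → Set V) :
    Monotone (burnt G F P) :=
  monotone_nat_of_le_succ fun _ => Set.subset_union_left

theorem protOf_mono {k : ℕ} (pos : ℕ → Fin k → V) : Monotone (protOf pos) :=
  fun _ _ h _ hv => by
    obtain ⟨s, hs, i, he⟩ := hv
    exact ⟨s, hs.trans h, i, he⟩

theorem protOf_zero {k : ℕ} (pos : ℕ → Fin k → V) : protOf pos 0 = Set.range (pos 0) := by
  ext v
  constructor
  · rintro ⟨s, hs, i, rfl⟩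
    obtain rfl := Nat.le_zero.mp hs
    exact ⟨i, rfl⟩
  · rintro ⟨i, rfl⟩
    exact ⟨0, le_refl 0, i, rfl⟩

theorem protOf_succ {k : ℕ} (pos : ℕ → Fin k → V) (t : ℕ) :
    protOf pos (t+1) = protOf pos t ∪ Set.range (pos (t+1)) := by
  ext v
  constructor
  · rintro ⟨s, hs, i, rfl⟩
    by_cases h : s ≤ t
    · exact Or.inl ⟨s, h, i, rfl⟩
    · have hst : s = t + 1 := by omega
      subst hst
      exact Or.inr ⟨i, rfl⟩
  · rintro (⟨s, hs, i, rfl⟩ | ⟨i, rfl⟩)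
    · exact ⟨s, hs.trans (Nat.le_succ t), i, rfl⟩
    · exact ⟨t+1, le_refl _, i, rfl⟩

theorem range_fin2 {α : Type*} (f : Fin 2 → α) : Set.range f = {f 0, f 1} := by
  ext x
  simp only [Set.mem_range, Set.mem_insert_iff, Set.mem_singleton_iff]
  constructor
  · rintro ⟨i, rfl⟩
    fin_cases i
    · exact Or.inl rfl
    · exact Or.inr rfl
  · rintro (rfl | rfl)
    · exact ⟨0, rfl⟩
    · exact ⟨1, rfl⟩

theorem burnt_stable (G : SimpleGraph V) (F : Set V) {k : ℕ} (pos : ℕ → Fin k → V) (T : ℕ)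
    (h : burnt G F (protOf pos) (T+1) ⊆ burnt G F (protOf pos) T) :
    ∀ t, burnt G F (protOf pos) t ⊆ burnt G F (protOf pos) T := by
  intro t
  induction t with
  | zero => exact burnt_mono G F _ (Nat.zero_le T)
  | succ t ih =>
    rcases le_or_gt (t+1) T with h1 | h1
    · exact burnt_mono G F _ h1
    · have hT : T ≤ t := Nat.lt_succ_iff.mp h1
      rw [burnt_succ]
      rintro v (hv | ⟨hv1, w, hw, hadj⟩)
      · exact ih hv
      · apply h
        rw [burnt_succ]
        exact Or.inr ⟨fun hc => hv1 (protOf_mono pos hT hc), w, ih hw, hadj⟩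

theorem reach_self (G : SimpleGraph V) (S : Set V) (d : ℕ) (v : V) (hv : v ∈ S) :
    ReachWithin G S d v v :=
  ⟨SimpleGraph.Walk.nil, by simp, by simpa using hv⟩

theorem protOf_image {k : ℕ} (e : V ≃ V) (pos : ℕ → Fin k → V) :
    protOf (fun t i => e (pos t i)) = fun t => e '' protOf pos t := by
  funext t
  ext v
  constructor
  · rintro ⟨s, hs, i, rfl⟩
    exact ⟨pos s i, ⟨s, hs, i, rfl⟩, rfl⟩
  · rintro ⟨w, ⟨s, hs, i, rfl⟩, rfl⟩
    exact ⟨s, hs, i, rfl⟩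

theorem burnt_image (G : SimpleGraph V) (e : V ≃ V)
    (he : ∀ a b, G.Adj (e a) (e b) ↔ G.Adj a b) (F : Set V) (P : ℕ → Set V) (t : ℕ) :
    burnt G (e '' F) (fun s => e '' P s) t = e '' burnt G F P t := by
  induction t with
  | zero => rfl
  | succ t ih =>
    rw [burnt_succ, burnt_succ, ih, Set.image_union]
    congr 1
    ext v
    constructor
    · rintro ⟨hv, w, ⟨w', hw', rfl⟩, hadj⟩
      refine ⟨e.symm v, ⟨fun hc => hv ⟨e.symm v, hc, e.apply_symm_apply v⟩, w', hw', ?_⟩,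
        e.apply_symm_apply v⟩
      rw [← e.apply_symm_apply v] at hadj
      exact (he _ _).mp hadj
    · rintro ⟨v', ⟨hv', w', hw', hadj⟩, rfl⟩
      refine ⟨?_, e w', ⟨w', hw', rfl⟩, (he _ _).mpr hadj⟩
      rintro ⟨p, hp, hpe⟩
      exact hv' (e.injective hpe ▸ hp)

theorem reach_image (G : SimpleGraph V) (e : V ≃ V)
    (he : ∀ a b, G.Adj (e a) (e b) ↔ G.Adj a b) {S : Set V} {d : ℕ} {u v : V}
    (h : ReachWithin G S d u v) : ReachWithin G (e '' S) d (e u) (e v) := by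
  obtain ⟨p, hl, hs⟩ := h
  refine ⟨p.map ⟨fun x => e x, fun h => (he _ _).mpr h⟩, ?_, ?_⟩
  · rwa [SimpleGraph.Walk.length_map]
  · intro x hx
    rw [SimpleGraph.Walk.support_map, List.mem_map] at hx
    obtain ⟨y, hy, rfl⟩ := hx
    exact ⟨y, hs y hy, rfl⟩

theorem transfer (G : SimpleGraph V) (e : V ≃ V)
    (he : ∀ a b, G.Adj (e a) (e b) ↔ G.Adj a b) {d k T : ℕ} {F : Set V}
    (h : CanContainIn G d k F T) : CanContainIn G d k (e '' F) T := by
  obtain ⟨pos, h0, hmove, hcont⟩ := h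
  have hP : protOf (fun t i => e (pos t i)) = fun t => e '' protOf pos t := protOf_image e pos
  refine ⟨fun t i => e (pos t i), ?_, ?_, ?_⟩
  · intro i hc
    obtain ⟨w, hw, hwe⟩ := hc
    exact h0 i (e.injective hwe ▸ hw)
  · intro t i
    have hr := reach_image G e he (hmove t i)
    rw [hP, burnt_image G e he]
    rwa [Set.image_compl_eq e.bijective] at hr
  · intro t
    rw [hP, burnt_image G e he, burnt_image G e he]
    exact Set.image_mono (hcont t)

theorem CanContainIn_mono {G : SimpleGraph V} {d d' k T : ℕ} {F : Set V} (hd : d ≤ d')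
    (h : CanContainIn G d k F T) : CanContainIn G d' k F T := by
  obtain ⟨pos, h0, hm, hc⟩ := h
  refine ⟨pos, h0, fun t i => ?_, hc⟩
  obtain ⟨p, hp1, hp2⟩ := hm t i
  exact ⟨p, hp1.trans hd, hp2⟩

def posA : ℕ → ℤ × ℤ
  | 0 => (-2, 0) | 1 => (-1, 1) | 2 => (0, 2) | 3 => (1, 3) | 4 => (3, 3) | _ => (4, 2)

def posB : ℕ → ℤ × ℤ
  | 0 => (-1, -1) | 1 => (1, -1) | 2 => (3, -1) | 3 => (5, -1) | 4 => (6, 0) | _ => (5, 1)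

def posOrig (t : ℕ) (i : Fin 2) : ℤ × ℤ := if i = 0 then posA t else posB t

def B1 : Set (ℤ × ℤ) := {((-1 : ℤ), (0 : ℤ)), ((0 : ℤ), (0 : ℤ)), ((0 : ℤ), (1 : ℤ)), ((1 : ℤ), (0 : ℤ))}

def B2 : Set (ℤ × ℤ) := {((-1 : ℤ), (0 : ℤ)), ((0 : ℤ), (0 : ℤ)), ((0 : ℤ), (1 : ℤ)), ((1 : ℤ), (0 : ℤ)), ((1 : ℤ), (1 : ℤ)), ((2 : ℤ), (0 : ℤ))}

def B3 : Set (ℤ × ℤ) := {((-1 : ℤ), (0 : ℤ)), ((0 : ℤ), (0 : ℤ)), ((0 : ℤ), (1 : ℤ)), ((1 : ℤ), (0 : ℤ)), ((1 : ℤ), (1 : ℤ)), ((1 : ℤ), (2 : ℤ)), ((2 : ℤ), (0 : ℤ)), ((2 : ℤ), (1 : ℤ)), ((3 : ℤ), (0 : ℤ))}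

def B4 : Set (ℤ × ℤ) := {((-1 : ℤ), (0 : ℤ)), ((0 : ℤ), (0 : ℤ)), ((0 : ℤ), (1 : ℤ)), ((1 : ℤ), (0 : ℤ)), ((1 : ℤ), (1 : ℤ)), ((1 : ℤ), (2 : ℤ)), ((2 : ℤ), (0 : ℤ)), ((2 : ℤ), (1 : ℤ)), ((2 : ℤ), (2 : ℤ)), ((3 : ℤ), (0 : ℤ)), ((3 : ℤ), (1 : ℤ)), ((4 : ℤ), (0 : ℤ))}

def B5 : Set (ℤ × ℤ) := {((-1 : ℤ), (0 : ℤ)), ((0 : ℤ), (0 : ℤ)), ((0 : ℤ), (1 : ℤ)), ((1 : ℤ), (0 : ℤ)), ((1 : ℤ), (1 : ℤ)), ((1 : ℤ), (2 : ℤ)), ((2 : ℤ), (0 : ℤ)), ((2 : ℤ), (1 : ℤ)), ((2 : ℤ), (2 : ℤ)), ((2 : ℤ), (3 : ℤ)), ((3 : ℤ), (0 : ℤ)), ((3 : ℤ), (1 : ℤ)), ((3 : ℤ), (2 : ℤ)), ((4 : ℤ), (0 : ℤ)), ((4 : ℤ), (1 : ℤ)), ((5 : ℤ), (0 : ℤ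))}

theorem hp0 : protOf posOrig 0 = ({((-2 : ℤ), (0 : ℤ)), ((-1 : ℤ), (-1 : ℤ))} : Set (ℤ × ℤ)) := by
  rw [protOf_zero, range_fin2]; rfl

theorem hp1 : protOf posOrig 1 = ({((-2 : ℤ), (0 : ℤ)), ((-1 : ℤ), (-1 : ℤ)), ((-1 : ℤ), (1 : ℤ)), ((1 : ℤ), (-1 : ℤ))} : Set (ℤ × ℤ)) := by
  show protOf posOrig (0+1) = _
  rw [protOf_succ, range_fin2, hp0]
  show ({((-2 : ℤ), (0 : ℤ)), ((-1 : ℤ), (-1 : ℤ))} : Set (ℤ × ℤ)) ∪ {((-1 : ℤ), (1 : ℤ)), ((1 : ℤ), (-1 : ℤ))} = _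
  ext v
  simp only [Set.mem_union, Set.mem_insert_iff, Set.mem_singleton_iff]
  tauto

theorem hp2 : protOf posOrig 2 = ({((-2 : ℤ), (0 : ℤ)), ((-1 : ℤ), (-1 : ℤ)), ((-1 : ℤ), (1 : ℤ)), ((0 : ℤ), (2 : ℤ)), ((1 : ℤ), (-1 : ℤ)), ((3 : ℤ), (-1 : ℤ))} : Set (ℤ × ℤ)) := by
  show protOf posOrig (1+1) = _
  rw [protOf_succ, range_fin2, hp1]
  show ({((-2 : ℤ), (0 : ℤ)), ((-1 : ℤ), (-1 : ℤ)), ((-1 : ℤ), (1 : ℤ)), ((1 : ℤ), (-1 : ℤ))} : Set (ℤ × ℤ)) ∪ {((0 : ℤ), (2 : ℤ)), ((3 : ℤ), (-1 : ℤ))} = _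
  ext v
  simp only [Set.mem_union, Set.mem_insert_iff, Set.mem_singleton_iff]
  tauto

theorem hp3 : protOf posOrig 3 = ({((-2 : ℤ), (0 : ℤ)), ((-1 : ℤ), (-1 : ℤ)), ((-1 : ℤ), (1 : ℤ)), ((0 : ℤ), (2 : ℤ)), ((1 : ℤ), (-1 : ℤ)), ((1 : ℤ), (3 : ℤ)), ((3 : ℤ), (-1 : ℤ)), ((5 : ℤ), (-1 : ℤ))} : Set (ℤ × ℤ)) := by
  show protOf posOrig (2+1) = _
  rw [protOf_succ, range_fin2, hp2]
  show ({((-2 : ℤ), (0 : ℤ)), ((-1 : ℤ), (-1 : ℤ)), ((-1 : ℤ), (1 : ℤ)), ((0 : ℤ), (2 : ℤ)), ((1 : ℤ), (-1 : ℤ)), ((3 : ℤ), (-1 : ℤ))} : Set (ℤ × ℤ)) ∪ {((1 : ℤ), (3 : ℤ)), ((5 : ℤ), (-1 : ℤ))} = _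
  ext v
  simp only [Set.mem_union, Set.mem_insert_iff, Set.mem_singleton_iff]
  tauto

theorem hp4 : protOf posOrig 4 = ({((-2 : ℤ), (0 : ℤ)), ((-1 : ℤ), (-1 : ℤ)), ((-1 : ℤ), (1 : ℤ)), ((0 : ℤ), (2 : ℤ)), ((1 : ℤ), (-1 : ℤ)), ((1 : ℤ), (3 : ℤ)), ((3 : ℤ), (-1 : ℤ)), ((3 : ℤ), (3 : ℤ)), ((5 : ℤ), (-1 : ℤ)), ((6 : ℤ), (0 : ℤ))} : Set (ℤ × ℤ)) := by
  show protOf posOrig (3+1) = _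
  rw [protOf_succ, range_fin2, hp3]
  show ({((-2 : ℤ), (0 : ℤ)), ((-1 : ℤ), (-1 : ℤ)), ((-1 : ℤ), (1 : ℤ)), ((0 : ℤ), (2 : ℤ)), ((1 : ℤ), (-1 : ℤ)), ((1 : ℤ), (3 : ℤ)), ((3 : ℤ), (-1 : ℤ)), ((5 : ℤ), (-1 : ℤ))} : Set (ℤ × ℤ)) ∪ {((3 : ℤ), (3 : ℤ)), ((6 : ℤ), (0 : ℤ))} = _
  ext v
  simp only [Set.mem_union, Set.mem_insert_iff, Set.mem_singleton_iff]
  tauto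

theorem hp5 : protOf posOrig 5 = ({((-2 : ℤ), (0 : ℤ)), ((-1 : ℤ), (-1 : ℤ)), ((-1 : ℤ), (1 : ℤ)), ((0 : ℤ), (2 : ℤ)), ((1 : ℤ), (-1 : ℤ)), ((1 : ℤ), (3 : ℤ)), ((3 : ℤ), (-1 : ℤ)), ((3 : ℤ), (3 : ℤ)), ((4 : ℤ), (2 : ℤ)), ((5 : ℤ), (-1 : ℤ)), ((5 : ℤ), (1 : ℤ)), ((6 : ℤ), (0 : ℤ))} : Set (ℤ × ℤ)) := by
  show protOf posOrig (4+1) = _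
  rw [protOf_succ, range_fin2, hp4]
  show ({((-2 : ℤ), (0 : ℤ)), ((-1 : ℤ), (-1 : ℤ)), ((-1 : ℤ), (1 : ℤ)), ((0 : ℤ), (2 : ℤ)), ((1 : ℤ), (-1 : ℤ)), ((1 : ℤ), (3 : ℤ)), ((3 : ℤ), (-1 : ℤ)), ((3 : ℤ), (3 : ℤ)), ((5 : ℤ), (-1 : ℤ)), ((6 : ℤ), (0 : ℤ))} : Set (ℤ × ℤ)) ∪ {((4 : ℤ), (2 : ℤ)), ((5 : ℤ), (1 : ℤ))} = _
  ext v
  simp only [Set.mem_union, Set.mem_insert_iff, Set.mem_singleton_iff]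
  tauto

theorem nbr_m1_0 (x y : ℤ) : hexGrid.Adj ((-1 : ℤ), (0 : ℤ)) (x, y) ↔ (x = 0 ∧ y = 0) ∨ (x = -2 ∧ y = 0) ∨ (x = -1 ∧ y = -1) := by
  rw [hexAdj]; omega

theorem nbr_0_0 (x y : ℤ) : hexGrid.Adj ((0 : ℤ), (0 : ℤ)) (x, y) ↔ (x = 1 ∧ y = 0) ∨ (x = -1 ∧ y = 0) ∨ (x = 0 ∧ y = 1) := by
  rw [hexAdj]; omega

theorem nbr_0_1 (x y : ℤ) : hexGrid.Adj ((0 : ℤ), (1 : ℤ)) (x, y) ↔ (x = 1 ∧ y = 1) ∨ (x = -1 ∧ y = 1) ∨ (x = 0 ∧ y = 0) := by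
  rw [hexAdj]; omega

theorem nbr_1_0 (x y : ℤ) : hexGrid.Adj ((1 : ℤ), (0 : ℤ)) (x, y) ↔ (x = 2 ∧ y = 0) ∨ (x = 0 ∧ y = 0) ∨ (x = 1 ∧ y = -1) := by
  rw [hexAdj]; omega

theorem nbr_1_1 (x y : ℤ) : hexGrid.Adj ((1 : ℤ), (1 : ℤ)) (x, y) ↔ (x = 2 ∧ y = 1) ∨ (x = 0 ∧ y = 1) ∨ (x = 1 ∧ y = 2) := by
  rw [hexAdj]; omega

theorem nbr_1_2 (x y : ℤ) : hexGrid.Adj ((1 : ℤ), (2 : ℤ)) (x, y) ↔ (x = 2 ∧ y = 2) ∨ (x = 0 ∧ y = 2) ∨ (x = 1 ∧ y = 1) := by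
  rw [hexAdj]; omega

theorem nbr_2_0 (x y : ℤ) : hexGrid.Adj ((2 : ℤ), (0 : ℤ)) (x, y) ↔ (x = 3 ∧ y = 0) ∨ (x = 1 ∧ y = 0) ∨ (x = 2 ∧ y = 1) := by
  rw [hexAdj]; omega

theorem nbr_2_1 (x y : ℤ) : hexGrid.Adj ((2 : ℤ), (1 : ℤ)) (x, y) ↔ (x = 3 ∧ y = 1) ∨ (x = 1 ∧ y = 1) ∨ (x = 2 ∧ y = 0) := by
  rw [hexAdj]; omega

theorem nbr_2_2 (x y : ℤ) : hexGrid.Adj ((2 : ℤ), (2 : ℤ)) (x, y) ↔ (x = 3 ∧ y = 2) ∨ (x = 1 ∧ y = 2) ∨ (x = 2 ∧ y = 3) := by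
  rw [hexAdj]; omega

theorem nbr_2_3 (x y : ℤ) : hexGrid.Adj ((2 : ℤ), (3 : ℤ)) (x, y) ↔ (x = 3 ∧ y = 3) ∨ (x = 1 ∧ y = 3) ∨ (x = 2 ∧ y = 2) := by
  rw [hexAdj]; omega

theorem nbr_3_0 (x y : ℤ) : hexGrid.Adj ((3 : ℤ), (0 : ℤ)) (x, y) ↔ (x = 4 ∧ y = 0) ∨ (x = 2 ∧ y = 0) ∨ (x = 3 ∧ y = -1) := by
  rw [hexAdj]; omega

theorem nbr_3_1 (x y : ℤ) : hexGrid.Adj ((3 : ℤ), (1 : ℤ)) (x, y) ↔ (x = 4 ∧ y = 1) ∨ (x = 2 ∧ y = 1) ∨ (x = 3 ∧ y = 2) := by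
  rw [hexAdj]; omega

theorem nbr_3_2 (x y : ℤ) : hexGrid.Adj ((3 : ℤ), (2 : ℤ)) (x, y) ↔ (x = 4 ∧ y = 2) ∨ (x = 2 ∧ y = 2) ∨ (x = 3 ∧ y = 1) := by
  rw [hexAdj]; omega

theorem nbr_4_0 (x y : ℤ) : hexGrid.Adj ((4 : ℤ), (0 : ℤ)) (x, y) ↔ (x = 5 ∧ y = 0) ∨ (x = 3 ∧ y = 0) ∨ (x = 4 ∧ y = 1) := by
  rw [hexAdj]; omega

theorem nbr_4_1 (x y : ℤ) : hexGrid.Adj ((4 : ℤ), (1 : ℤ)) (x, y) ↔ (x = 5 ∧ y = 1) ∨ (x = 3 ∧ y = 1) ∨ (x = 4 ∧ y = 0) := by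
  rw [hexAdj]; omega

theorem nbr_5_0 (x y : ℤ) : hexGrid.Adj ((5 : ℤ), (0 : ℤ)) (x, y) ↔ (x = 6 ∧ y = 0) ∨ (x = 4 ∧ y = 0) ∨ (x = 5 ∧ y = -1) := by
  rw [hexAdj]; omega

theorem hb0 : burnt hexGrid {((0 : ℤ), (0 : ℤ))} (protOf posOrig) 0 = {((0 : ℤ), (0 : ℤ))} := rfl

theorem hb1 : burnt hexGrid {((0 : ℤ), (0 : ℤ))} (protOf posOrig) 1 = B1 := by
  show burnt hexGrid {((0 : ℤ), (0 : ℤ))} (protOf posOrig) (0+1) = _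
  rw [burnt_succ, hb0, hp0]
  ext ⟨x, y⟩
  simp only [B1, Set.mem_union, Set.mem_setOf_eq, Set.mem_insert_iff,
    Set.mem_singleton_iff, Prod.mk.injEq, nbr_0_0,
    exists_eq_or_imp, exists_eq_left, not_or]
  constructor
  · rintro (h | ⟨hp, h⟩)
    · rcases h with ⟨rfl, rfl⟩ <;> decide
    · rcases h with ⟨rfl, rfl⟩ | ⟨rfl, rfl⟩ | ⟨rfl, rfl⟩ <;> first | decide | exact absurd hp (by decide)
  · intro h
    rcases h with ⟨rfl, rfl⟩ | ⟨rfl, rfl⟩ | ⟨rfl, rfl⟩ | ⟨rfl, rfl⟩ <;> decide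

theorem hb2 : burnt hexGrid {((0 : ℤ), (0 : ℤ))} (protOf posOrig) 2 = B2 := by
  show burnt hexGrid {((0 : ℤ), (0 : ℤ))} (protOf posOrig) (1+1) = _
  rw [burnt_succ, hb1, hp1]
  ext ⟨x, y⟩
  simp only [B2, B1, Set.mem_union, Set.mem_setOf_eq, Set.mem_insert_iff,
    Set.mem_singleton_iff, Prod.mk.injEq, nbr_m1_0, nbr_0_0, nbr_0_1, nbr_1_0,
    exists_eq_or_imp, exists_eq_left, not_or]
  constructor
  · rintro (h | ⟨hp, h⟩)
    · rcases h with ⟨rfl, rfl⟩ | ⟨rfl, rfl⟩ | ⟨rfl, rfl⟩ | ⟨rfl, rfl⟩ <;> decide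
    · rcases h with (⟨rfl, rfl⟩ | ⟨rfl, rfl⟩ | ⟨rfl, rfl⟩) | (⟨rfl, rfl⟩ | ⟨rfl, rfl⟩ | ⟨rfl, rfl⟩) | (⟨rfl, rfl⟩ | ⟨rfl, rfl⟩ | ⟨rfl, rfl⟩) | ⟨rfl, rfl⟩ | ⟨rfl, rfl⟩ | ⟨rfl, rfl⟩ <;> first | decide | exact absurd hp (by decide)
  · intro h
    rcases h with ⟨rfl, rfl⟩ | ⟨rfl, rfl⟩ | ⟨rfl, rfl⟩ | ⟨rfl, rfl⟩ | ⟨rfl, rfl⟩ | ⟨rfl, rfl⟩ <;> decide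

theorem hb3 : burnt hexGrid {((0 : ℤ), (0 : ℤ))} (protOf posOrig) 3 = B3 := by
  show burnt hexGrid {((0 : ℤ), (0 : ℤ))} (protOf posOrig) (2+1) = _
  rw [burnt_succ, hb2, hp2]
  ext ⟨x, y⟩
  simp only [B3, B2, Set.mem_union, Set.mem_setOf_eq, Set.mem_insert_iff,
    Set.mem_singleton_iff, Prod.mk.injEq, nbr_m1_0, nbr_0_0, nbr_0_1, nbr_1_0, nbr_1_1, nbr_2_0,
    exists_eq_or_imp, exists_eq_left, not_or]
  constructor
  · rintro (h | ⟨hp, h⟩)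
    · rcases h with ⟨rfl, rfl⟩ | ⟨rfl, rfl⟩ | ⟨rfl, rfl⟩ | ⟨rfl, rfl⟩ | ⟨rfl, rfl⟩ | ⟨rfl, rfl⟩ <;> decide
    · rcases h with (⟨rfl, rfl⟩ | ⟨rfl, rfl⟩ | ⟨rfl, rfl⟩) | (⟨rfl, rfl⟩ | ⟨rfl, rfl⟩ | ⟨rfl, rfl⟩) | (⟨rfl, rfl⟩ | ⟨rfl, rfl⟩ | ⟨rfl, rfl⟩) | (⟨rfl, rfl⟩ | ⟨rfl, rfl⟩ | ⟨rfl, rfl⟩) | (⟨rfl, rfl⟩ | ⟨rfl, rfl⟩ | ⟨rfl, rfl⟩) | ⟨rfl, rfl⟩ | ⟨rfl, rfl⟩ | ⟨rfl, rfl⟩ <;> first | decide | exact absurd hp (by decide)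
  · intro h
    rcases h with ⟨rfl, rfl⟩ | ⟨rfl, rfl⟩ | ⟨rfl, rfl⟩ | ⟨rfl, rfl⟩ | ⟨rfl, rfl⟩ | ⟨rfl, rfl⟩ | ⟨rfl, rfl⟩ | ⟨rfl, rfl⟩ | ⟨rfl, rfl⟩ <;> decide

theorem hb4 : burnt hexGrid {((0 : ℤ), (0 : ℤ))} (protOf posOrig) 4 = B4 := by
  show burnt hexGrid {((0 : ℤ), (0 : ℤ))} (protOf posOrig) (3+1) = _
  rw [burnt_succ, hb3, hp3]
  ext ⟨x, y⟩
  simp only [B4, B3, Set.mem_union, Set.mem_setOf_eq, Set.mem_insert_iff,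
    Set.mem_singleton_iff, Prod.mk.injEq, nbr_m1_0, nbr_0_0, nbr_0_1, nbr_1_0, nbr_1_1, nbr_1_2, nbr_2_0, nbr_2_1, nbr_3_0,
    exists_eq_or_imp, exists_eq_left, not_or]
  constructor
  · rintro (h | ⟨hp, h⟩)
    · rcases h with ⟨rfl, rfl⟩ | ⟨rfl, rfl⟩ | ⟨rfl, rfl⟩ | ⟨rfl, rfl⟩ | ⟨rfl, rfl⟩ | ⟨rfl, rfl⟩ | ⟨rfl, rfl⟩ | ⟨rfl, rfl⟩ | ⟨rfl, rfl⟩ <;> decide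
    · rcases h with (⟨rfl, rfl⟩ | ⟨rfl, rfl⟩ | ⟨rfl, rfl⟩) | (⟨rfl, rfl⟩ | ⟨rfl, rfl⟩ | ⟨rfl, rfl⟩) | (⟨rfl, rfl⟩ | ⟨rfl, rfl⟩ | ⟨rfl, rfl⟩) | (⟨rfl, rfl⟩ | ⟨rfl, rfl⟩ | ⟨rfl, rfl⟩) | (⟨rfl, rfl⟩ | ⟨rfl, rfl⟩ | ⟨rfl, rfl⟩) | (⟨rfl, rfl⟩ | ⟨rfl, rfl⟩ | ⟨rfl, rfl⟩) | (⟨rfl, rfl⟩ | ⟨rfl, rfl⟩ | ⟨rfl, rfl⟩) | (⟨rfl, rfl⟩ | ⟨rfl, rfl⟩ | ⟨rfl, rfl⟩) | ⟨rfl, rfl⟩ | ⟨rfl, rfl⟩ | ⟨rfl, rfl⟩ <;> first | decide | exact absurd hp (by decide)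
  · intro h
    rcases h with ⟨rfl, rfl⟩ | ⟨rfl, rfl⟩ | ⟨rfl, rfl⟩ | ⟨rfl, rfl⟩ | ⟨rfl, rfl⟩ | ⟨rfl, rfl⟩ | ⟨rfl, rfl⟩ | ⟨rfl, rfl⟩ | ⟨rfl, rfl⟩ | ⟨rfl, rfl⟩ | ⟨rfl, rfl⟩ | ⟨rfl, rfl⟩ <;> decide

theorem hb5 : burnt hexGrid {((0 : ℤ), (0 : ℤ))} (protOf posOrig) 5 = B5 := by
  show burnt hexGrid {((0 : ℤ), (0 : ℤ))} (protOf posOrig) (4+1) = _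
  rw [burnt_succ, hb4, hp4]
  ext ⟨x, y⟩
  simp only [B5, B4, Set.mem_union, Set.mem_setOf_eq, Set.mem_insert_iff,
    Set.mem_singleton_iff, Prod.mk.injEq, nbr_m1_0, nbr_0_0, nbr_0_1, nbr_1_0, nbr_1_1, nbr_1_2, nbr_2_0, nbr_2_1, nbr_2_2, nbr_3_0, nbr_3_1, nbr_4_0,
    exists_eq_or_imp, exists_eq_left, not_or]
  constructor
  · rintro (h | ⟨hp, h⟩)
    · rcases h with ⟨rfl, rfl⟩ | ⟨rfl, rfl⟩ | ⟨rfl, rfl⟩ | ⟨rfl, rfl⟩ | ⟨rfl, rfl⟩ | ⟨rfl, rfl⟩ | ⟨rfl, rfl⟩ | ⟨rfl, rfl⟩ | ⟨rfl, rfl⟩ | ⟨rfl, rfl⟩ | ⟨rfl, rfl⟩ | ⟨rfl, rfl⟩ <;> decide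
    · rcases h with (⟨rfl, rfl⟩ | ⟨rfl, rfl⟩ | ⟨rfl, rfl⟩) | (⟨rfl, rfl⟩ | ⟨rfl, rfl⟩ | ⟨rfl, rfl⟩) | (⟨rfl, rfl⟩ | ⟨rfl, rfl⟩ | ⟨rfl, rfl⟩) | (⟨rfl, rfl⟩ | ⟨rfl, rfl⟩ | ⟨rfl, rfl⟩) | (⟨rfl, rfl⟩ | ⟨rfl, rfl⟩ | ⟨rfl, rfl⟩) | (⟨rfl, rfl⟩ | ⟨rfl, rfl⟩ | ⟨rfl, rfl⟩) | (⟨rfl, rfl⟩ | ⟨rfl, rfl⟩ | ⟨rfl, rfl⟩) | (⟨rfl, rfl⟩ | ⟨rfl, rfl⟩ | ⟨rfl, rfl⟩) | (⟨rfl, rfl⟩ | ⟨rfl, rfl⟩ | ⟨rfl, rfl⟩) | (⟨rfl, rfl⟩ | ⟨rfl, rfl⟩ | ⟨rfl, rfl⟩) | (⟨rfl, rfl⟩ | ⟨rfl, rfl⟩ | ⟨rfl, rfl⟩) | ⟨rfl, rfl⟩ | ⟨rfl, rfl⟩ | ⟨rfl, rfl⟩ <;> first | decide | exact absurd hp (by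 decide)
  · intro h
    rcases h with ⟨rfl, rfl⟩ | ⟨rfl, rfl⟩ | ⟨rfl, rfl⟩ | ⟨rfl, rfl⟩ | ⟨rfl, rfl⟩ | ⟨rfl, rfl⟩ | ⟨rfl, rfl⟩ | ⟨rfl, rfl⟩ | ⟨rfl, rfl⟩ | ⟨rfl, rfl⟩ | ⟨rfl, rfl⟩ | ⟨rfl, rfl⟩ | ⟨rfl, rfl⟩ | ⟨rfl, rfl⟩ | ⟨rfl, rfl⟩ | ⟨rfl, rfl⟩ <;> decide

theorem hb6 : burnt hexGrid {((0 : ℤ), (0 : ℤ))} (protOf posOrig) 6 = B5 := by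
  show burnt hexGrid {((0 : ℤ), (0 : ℤ))} (protOf posOrig) (5+1) = _
  rw [burnt_succ, hb5, hp5]
  ext ⟨x, y⟩
  simp only [B5, B5, Set.mem_union, Set.mem_setOf_eq, Set.mem_insert_iff,
    Set.mem_singleton_iff, Prod.mk.injEq, nbr_m1_0, nbr_0_0, nbr_0_1, nbr_1_0, nbr_1_1, nbr_1_2, nbr_2_0, nbr_2_1, nbr_2_2, nbr_2_3, nbr_3_0, nbr_3_1, nbr_3_2, nbr_4_0, nbr_4_1, nbr_5_0,
    exists_eq_or_imp, exists_eq_left, not_or]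
  constructor
  · rintro (h | ⟨hp, h⟩)
    · rcases h with ⟨rfl, rfl⟩ | ⟨rfl, rfl⟩ | ⟨rfl, rfl⟩ | ⟨rfl, rfl⟩ | ⟨rfl, rfl⟩ | ⟨rfl, rfl⟩ | ⟨rfl, rfl⟩ | ⟨rfl, rfl⟩ | ⟨rfl, rfl⟩ | ⟨rfl, rfl⟩ | ⟨rfl, rfl⟩ | ⟨rfl, rfl⟩ | ⟨rfl, rfl⟩ | ⟨rfl, rfl⟩ | ⟨rfl, rfl⟩ | ⟨rfl, rfl⟩ <;> decide
    · rcases h with (⟨rfl, rfl⟩ | ⟨rfl, rfl⟩ | ⟨rfl, rfl⟩) | (⟨rfl, rfl⟩ | ⟨rfl, rfl⟩ | ⟨rfl, rfl⟩) | (⟨rfl, rfl⟩ | ⟨rfl, rfl⟩ | ⟨rfl, rfl⟩) | (⟨rfl, rfl⟩ | ⟨rfl, rfl⟩ | ⟨rfl, rfl⟩) | (⟨rfl, rfl⟩ | ⟨rfl, rfl⟩ | ⟨rfl, rfl⟩) | (⟨rfl, rfl⟩ | ⟨rfl, rfl⟩ | ⟨rfl, rfl⟩) | (⟨rfl, rfl⟩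 | ⟨rfl, rfl⟩ | ⟨rfl, rfl⟩) | (⟨rfl, rfl⟩ | ⟨rfl, rfl⟩ | ⟨rfl, rfl⟩) | (⟨rfl, rfl⟩ | ⟨rfl, rfl⟩ | ⟨rfl, rfl⟩) | (⟨rfl, rfl⟩ | ⟨rfl, rfl⟩ | ⟨rfl, rfl⟩) | (⟨rfl, rfl⟩ | ⟨rfl, rfl⟩ | ⟨rfl, rfl⟩) | (⟨rfl, rfl⟩ | ⟨rfl, rfl⟩ | ⟨rfl, rfl⟩) | (⟨rfl, rfl⟩ | ⟨rfl, rfl⟩ | ⟨rfl, rfl⟩) | (⟨rfl, rfl⟩ | ⟨rfl, rfl⟩ | ⟨rfl, rfl⟩) | (⟨rfl, rfl⟩ | ⟨rfl, rfl⟩ | ⟨rfl, rfl⟩) | ⟨rfl, rfl⟩ | ⟨rfl, rfl⟩ | ⟨rfl, rfl⟩ <;> first | decide | exact absurd hp (by decide)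
  · intro h
    rcases h with ⟨rfl, rfl⟩ | ⟨rfl, rfl⟩ | ⟨rfl, rfl⟩ | ⟨rfl, rfl⟩ | ⟨rfl, rfl⟩ | ⟨rfl, rfl⟩ | ⟨rfl, rfl⟩ | ⟨rfl, rfl⟩ | ⟨rfl, rfl⟩ | ⟨rfl, rfl⟩ | ⟨rfl, rfl⟩ | ⟨rfl, rfl⟩ | ⟨rfl, rfl⟩ | ⟨rfl, rfl⟩ | ⟨rfl, rfl⟩ | ⟨rfl, rfl⟩ <;> decide

theorem base : CanContainIn hexGrid 2 2 {((0 : ℤ), (0 : ℤ))} 5 := by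
  have hstab : ∀ t, burnt hexGrid {((0 : ℤ), (0 : ℤ))} (protOf posOrig) t ⊆
      burnt hexGrid {((0 : ℤ), (0 : ℤ))} (protOf posOrig) 5 :=
    burnt_stable hexGrid {((0 : ℤ), (0 : ℤ))} posOrig 5
      (by show burnt hexGrid {((0 : ℤ), (0 : ℤ))} (protOf posOrig) 6 ⊆ burnt hexGrid {((0 : ℤ), (0 : ℤ))} (protOf posOrig) 5
          rw [hb6, hb5])
  refine ⟨posOrig, ?_, ?_, hstab⟩
  · intro i
    fin_cases i <;> · intro h; rw [Set.mem_singleton_iff] at h; exact absurd h (by decide)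
  · intro t i
    fin_cases i
    · match t with
      | 0 =>
        show ReachWithin hexGrid (burnt hexGrid {((0 : ℤ), (0 : ℤ))} (protOf posOrig) (0+1))ᶜ 2 ((-2 : ℤ), (0 : ℤ)) ((-1 : ℤ), (1 : ℤ))
        refine ⟨SimpleGraph.Walk.cons ((hexAdj (-2) (0) (-2) (1)).mpr (by decide))
          (SimpleGraph.Walk.cons ((hexAdj (-2) (1) (-1) (1)).mpr (by decide))
          SimpleGraph.Walk.nil), by simp, ?_⟩
        intro x hx
        simp only [SimpleGraph.Walk.support_cons, SimpleGraph.Walk.support_nil,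
          List.mem_cons, List.not_mem_nil, or_false, List.mem_singleton] at hx
        rw [Set.mem_compl_iff,
          show burnt hexGrid {((0 : ℤ), (0 : ℤ))} (protOf posOrig) (0+1) = B1 from hb1]
        rcases hx with rfl | rfl | rfl <;>
          · simp only [B1, Set.mem_insert_iff, Set.mem_singleton_iff]
            decide
      | 1 =>
        show ReachWithin hexGrid (burnt hexGrid {((0 : ℤ), (0 : ℤ))} (protOf posOrig) (1+1))ᶜ 2 ((-1 : ℤ), (1 : ℤ)) ((0 : ℤ), (2 : ℤ))
        refine ⟨SimpleGraph.Walk.cons ((hexAdj (-1) (1) (-1) (2)).mpr (by decide))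
          (SimpleGraph.Walk.cons ((hexAdj (-1) (2) (0) (2)).mpr (by decide))
          SimpleGraph.Walk.nil), by simp, ?_⟩
        intro x hx
        simp only [SimpleGraph.Walk.support_cons, SimpleGraph.Walk.support_nil,
          List.mem_cons, List.not_mem_nil, or_false, List.mem_singleton] at hx
        rw [Set.mem_compl_iff,
          show burnt hexGrid {((0 : ℤ), (0 : ℤ))} (protOf posOrig) (1+1) = B2 from hb2]
        rcases hx with rfl | rfl | rfl <;>
          · simp only [B2, Set.mem_insert_iff, Set.mem_singleton_iff]
            decide
      | 2 =>
        show ReachWithin hexGrid (burnt hexGrid {((0 : ℤ), (0 : ℤ))} (protOf posOrig) (2+1))ᶜ 2 ((0 : ℤ), (2 : ℤ)) ((1 : ℤ), (3 : ℤ))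
        refine ⟨SimpleGraph.Walk.cons ((hexAdj (0) (2) (0) (3)).mpr (by decide))
          (SimpleGraph.Walk.cons ((hexAdj (0) (3) (1) (3)).mpr (by decide))
          SimpleGraph.Walk.nil), by simp, ?_⟩
        intro x hx
        simp only [SimpleGraph.Walk.support_cons, SimpleGraph.Walk.support_nil,
          List.mem_cons, List.not_mem_nil, or_false, List.mem_singleton] at hx
        rw [Set.mem_compl_iff,
          show burnt hexGrid {((0 : ℤ), (0 : ℤ))} (protOf posOrig) (2+1) = B3 from hb3]
        rcases hx with rfl | rfl | rfl <;>
          · simp only [B3, Set.mem_insert_iff, Set.mem_singleton_iff]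
            decide
      | 3 =>
        show ReachWithin hexGrid (burnt hexGrid {((0 : ℤ), (0 : ℤ))} (protOf posOrig) (3+1))ᶜ 2 ((1 : ℤ), (3 : ℤ)) ((3 : ℤ), (3 : ℤ))
        refine ⟨SimpleGraph.Walk.cons ((hexAdj (1) (3) (2) (3)).mpr (by decide))
          (SimpleGraph.Walk.cons ((hexAdj (2) (3) (3) (3)).mpr (by decide))
          SimpleGraph.Walk.nil), by simp, ?_⟩
        intro x hx
        simp only [SimpleGraph.Walk.support_cons, SimpleGraph.Walk.support_nil,
          List.mem_cons, List.not_mem_nil, or_false, List.mem_singleton] at hx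
        rw [Set.mem_compl_iff,
          show burnt hexGrid {((0 : ℤ), (0 : ℤ))} (protOf posOrig) (3+1) = B4 from hb4]
        rcases hx with rfl | rfl | rfl <;>
          · simp only [B4, Set.mem_insert_iff, Set.mem_singleton_iff]
            decide
      | 4 =>
        show ReachWithin hexGrid (burnt hexGrid {((0 : ℤ), (0 : ℤ))} (protOf posOrig) (4+1))ᶜ 2 ((3 : ℤ), (3 : ℤ)) ((4 : ℤ), (2 : ℤ))
        refine ⟨SimpleGraph.Walk.cons ((hexAdj (3) (3) (4) (3)).mpr (by decide))
          (SimpleGraph.Walk.cons ((hexAdj (4) (3) (4) (2)).mpr (by decide))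
          SimpleGraph.Walk.nil), by simp, ?_⟩
        intro x hx
        simp only [SimpleGraph.Walk.support_cons, SimpleGraph.Walk.support_nil,
          List.mem_cons, List.not_mem_nil, or_false, List.mem_singleton] at hx
        rw [Set.mem_compl_iff,
          show burnt hexGrid {((0 : ℤ), (0 : ℤ))} (protOf posOrig) (4+1) = B5 from hb5]
        rcases hx with rfl | rfl | rfl <;>
          · simp only [B5, Set.mem_insert_iff, Set.mem_singleton_iff]
            decide
      | n + 5 =>
        show ReachWithin hexGrid (burnt hexGrid {((0 : ℤ), (0 : ℤ))} (protOf posOrig) (n+5+1))ᶜ 2 ((4 : ℤ), (2 : ℤ)) ((4 : ℤ), (2 : ℤ))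
        apply reach_self
        intro hc
        have h5 := hstab (n+5+1) hc
        rw [hb5] at h5
        simp only [B5, Set.mem_insert_iff, Set.mem_singleton_iff] at h5
        exact absurd h5 (by decide)
    · match t with
      | 0 =>
        show ReachWithin hexGrid (burnt hexGrid {((0 : ℤ), (0 : ℤ))} (protOf posOrig) (0+1))ᶜ 2 ((-1 : ℤ), (-1 : ℤ)) ((1 : ℤ), (-1 : ℤ))
        refine ⟨SimpleGraph.Walk.cons ((hexAdj (-1) (-1) (0) (-1)).mpr (by decide))
          (SimpleGraph.Walk.cons ((hexAdj (0) (-1) (1) (-1)).mpr (by decide))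
          SimpleGraph.Walk.nil), by simp, ?_⟩
        intro x hx
        simp only [SimpleGraph.Walk.support_cons, SimpleGraph.Walk.support_nil,
          List.mem_cons, List.not_mem_nil, or_false, List.mem_singleton] at hx
        rw [Set.mem_compl_iff,
          show burnt hexGrid {((0 : ℤ), (0 : ℤ))} (protOf posOrig) (0+1) = B1 from hb1]
        rcases hx with rfl | rfl | rfl <;>
          · simp only [B1, Set.mem_insert_iff, Set.mem_singleton_iff]
            decide
      | 1 =>
        show ReachWithin hexGrid (burnt hexGrid {((0 : ℤ), (0 : ℤ))} (protOf posOrig) (1+1))ᶜ 2 ((1 : ℤ), (-1 : ℤ)) ((3 : ℤ), (-1 : ℤ))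
        refine ⟨SimpleGraph.Walk.cons ((hexAdj (1) (-1) (2) (-1)).mpr (by decide))
          (SimpleGraph.Walk.cons ((hexAdj (2) (-1) (3) (-1)).mpr (by decide))
          SimpleGraph.Walk.nil), by simp, ?_⟩
        intro x hx
        simp only [SimpleGraph.Walk.support_cons, SimpleGraph.Walk.support_nil,
          List.mem_cons, List.not_mem_nil, or_false, List.mem_singleton] at hx
        rw [Set.mem_compl_iff,
          show burnt hexGrid {((0 : ℤ), (0 : ℤ))} (protOf posOrig) (1+1) = B2 from hb2]
        rcases hx with rfl | rfl | rfl <;>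
          · simp only [B2, Set.mem_insert_iff, Set.mem_singleton_iff]
            decide
      | 2 =>
        show ReachWithin hexGrid (burnt hexGrid {((0 : ℤ), (0 : ℤ))} (protOf posOrig) (2+1))ᶜ 2 ((3 : ℤ), (-1 : ℤ)) ((5 : ℤ), (-1 : ℤ))
        refine ⟨SimpleGraph.Walk.cons ((hexAdj (3) (-1) (4) (-1)).mpr (by decide))
          (SimpleGraph.Walk.cons ((hexAdj (4) (-1) (5) (-1)).mpr (by decide))
          SimpleGraph.Walk.nil), by simp, ?_⟩
        intro x hx
        simp only [SimpleGraph.Walk.support_cons, SimpleGraph.Walk.support_nil,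
          List.mem_cons, List.not_mem_nil, or_false, List.mem_singleton] at hx
        rw [Set.mem_compl_iff,
          show burnt hexGrid {((0 : ℤ), (0 : ℤ))} (protOf posOrig) (2+1) = B3 from hb3]
        rcases hx with rfl | rfl | rfl <;>
          · simp only [B3, Set.mem_insert_iff, Set.mem_singleton_iff]
            decide
      | 3 =>
        show ReachWithin hexGrid (burnt hexGrid {((0 : ℤ), (0 : ℤ))} (protOf posOrig) (3+1))ᶜ 2 ((5 : ℤ), (-1 : ℤ)) ((6 : ℤ), (0 : ℤ))
        refine ⟨SimpleGraph.Walk.cons ((hexAdj (5) (-1) (5) (0)).mpr (by decide))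
          (SimpleGraph.Walk.cons ((hexAdj (5) (0) (6) (0)).mpr (by decide))
          SimpleGraph.Walk.nil), by simp, ?_⟩
        intro x hx
        simp only [SimpleGraph.Walk.support_cons, SimpleGraph.Walk.support_nil,
          List.mem_cons, List.not_mem_nil, or_false, List.mem_singleton] at hx
        rw [Set.mem_compl_iff,
          show burnt hexGrid {((0 : ℤ), (0 : ℤ))} (protOf posOrig) (3+1) = B4 from hb4]
        rcases hx with rfl | rfl | rfl <;>
          · simp only [B4, Set.mem_insert_iff, Set.mem_singleton_iff]
            decide
      | 4 =>
        show ReachWithin hexGrid (burnt hexGrid {((0 : ℤ), (0 : ℤ))} (protOf posOrig) (4+1))ᶜ 2 ((6 : ℤ), (0 : ℤ)) ((5 : ℤ), (1 : ℤ))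
        refine ⟨SimpleGraph.Walk.cons ((hexAdj (6) (0) (6) (1)).mpr (by decide))
          (SimpleGraph.Walk.cons ((hexAdj (6) (1) (5) (1)).mpr (by decide))
          SimpleGraph.Walk.nil), by simp, ?_⟩
        intro x hx
        simp only [SimpleGraph.Walk.support_cons, SimpleGraph.Walk.support_nil,
          List.mem_cons, List.not_mem_nil, or_false, List.mem_singleton] at hx
        rw [Set.mem_compl_iff,
          show burnt hexGrid {((0 : ℤ), (0 : ℤ))} (protOf posOrig) (4+1) = B5 from hb5]
        rcases hx with rfl | rfl | rfl <;>
          · simp only [B5, Set.mem_insert_iff, Set.mem_singleton_iff]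
            decide
      | n + 5 =>
        show ReachWithin hexGrid (burnt hexGrid {((0 : ℤ), (0 : ℤ))} (protOf posOrig) (n+5+1))ᶜ 2 ((5 : ℤ), (1 : ℤ)) ((5 : ℤ), (1 : ℤ))
        apply reach_self
        intro hc
        have h5 := hstab (n+5+1) hc
        rw [hb5] at h5
        simp only [B5, Set.mem_insert_iff, Set.mem_singleton_iff] at h5
        exact absurd h5 (by decide)

theorem can_u (u : ℤ × ℤ) : CanContainIn hexGrid 2 2 {u} 5 := by
  rcases Int.even_or_odd (u.1 + u.2) with hpar | hpar
  · rw [Int.even_iff] at hpar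
    let e : (ℤ × ℤ) ≃ (ℤ × ℤ) :=
      ⟨fun p => (u.1 + p.1, u.2 + p.2), fun p => (p.1 - u.1, p.2 - u.2),
        fun p => by simp, fun p => by simp⟩
    have he : ∀ a b : ℤ × ℤ, hexGrid.Adj (e a) (e b) ↔ hexGrid.Adj a b := by
      rintro ⟨a1, a2⟩ ⟨b1, b2⟩
      show hexGrid.Adj (u.1 + a1, u.2 + a2) (u.1 + b1, u.2 + b2) ↔ hexGrid.Adj (a1, a2) (b1, b2)
      rw [hexAdj, hexAdj]
      omega
    have himg : ({u} : Set (ℤ × ℤ)) = e '' {((0 : ℤ), (0 : ℤ))} := by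
      rw [Set.image_singleton]
      show _ = ({(u.1 + 0, u.2 + 0)} : Set (ℤ × ℤ))
      simp
    rw [himg]
    exact transfer hexGrid e he base
  · rw [Int.odd_iff] at hpar
    let e : (ℤ × ℤ) ≃ (ℤ × ℤ) :=
      ⟨fun p => (u.1 + p.1, u.2 - p.2), fun p => (p.1 - u.1, u.2 - p.2),
        fun p => by simp, fun p => by simp⟩
    have he : ∀ a b : ℤ × ℤ, hexGrid.Adj (e a) (e b) ↔ hexGrid.Adj a b := by
      rintro ⟨a1, a2⟩ ⟨b1, b2⟩
      show hexGrid.Adj (u.1 + a1, u.2 - a2) (u.1 + b1, u.2 - b2) ↔ hexGrid.Adj (a1, a2) (b1, b2)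
      rw [hexAdj, hexAdj]
      omega
    have himg : ({u} : Set (ℤ × ℤ)) = e '' {((0 : ℤ), (0 : ℤ))} := by
      rw [Set.image_singleton]
      show _ = ({(u.1 + 0, u.2 - 0)} : Set (ℤ × ℤ))
      simp
    rw [himg]
    exact transfer hexGrid e he base

/-- For every integer `d ≥ 2`, two firefighters suffice to contain the fire on the infinite
hexagonal grid in the distance-restricted game with parameter `d` (and when `d = 2` they
can contain it within five turns): `f_d(G_hex) ≤ 2` for all `d ≥ 2`. -/
theorem hex_grid_dge2 :
    (∀ d : ℕ, 2 ≤ d → ∀ u : ℤ × ℤ, fdNum hexGrid d u ≤ 2) ∧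
    (∀ u : ℤ × ℤ, CanContainIn hexGrid 2 2 {u} 5) := by
  refine ⟨?_, can_u⟩
  intro d hd u
  apply Nat.sInf_le
  exact ⟨5, CanContainIn_mono hd (can_u u)⟩

end Firefight
end
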